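/- For any probability measure π on 𝒳×{−1,1} and any measurable function f:𝒳→ℝ, the excess Bayes risk is bounded by the excess hinge risk: R(f) − R* ≤ A(f) − A*, where R(f) = R(sign(f)). -/

import Mathlib

open MeasureTheory
open scoped ENNReal NNReal

noncomputable section

namespace AggClass

variable {X : Type*} [MeasurableSpace X]

/-- The sign function, with the convention `sgn 0 = 1`. -/
def sgn (t : ℝ) : ℝ := if 0 ≤ t then 1 else -1

/-- The Bayes rule `f*(x) = sign (2 η x - 1)`. -/
def bayes (η : X → ℝ) : X → ℝ := fun x => sgn (2 * η x - 1)

/-- The hinge risk `A(f) = E[max (1 - Y f(X)) 0]`, as an extended nonnegative real. -/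
def hingeRiskE (π : Measure (X × ℝ)) (f : X → ℝ) : ℝ≥0∞ :=
  ∫⁻ p, ENNReal.ofReal (max (1 - p.2 * f p.1) 0) ∂π

/-- The optimal hinge risk `A* = inf {A(f) : f : X → ℝ measurable}`. -/
def optHingeRiskE (π : Measure (X × ℝ)) : ℝ≥0∞ :=
  ⨅ (f : X → ℝ) (_ : Measurable f), hingeRiskE π f

/-- The hinge risk, real-valued. -/
def hingeRisk (π : Measure (X × ℝ)) (f : X → ℝ) : ℝ := (hingeRiskE π f).toReal

/-- The optimal hinge risk, real-valued. -/
def optHingeRisk (π : Measure (X × ℝ)) : ℝ := (optHingeRiskE π).toReal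

/-- The misclassification risk `R(f) = π (Y ≠ sign (f X))`, ℝ≥0∞-valued. -/
def misRiskE (π : Measure (X × ℝ)) (f : X → ℝ) : ℝ≥0∞ :=
  π {p : X × ℝ | p.2 ≠ sgn (f p.1)}

/-- The misclassification risk, real-valued. -/
def misRisk (π : Measure (X × ℝ)) (f : X → ℝ) : ℝ := (misRiskE π f).toReal

/-- `π` is a joint law of a pair (X,Y) on `X × {-1,1}` with regression function
`η x = π(Y = 1 ∣ X = x)`. -/
structure IsClassif (π : Measure (X × ℝ)) (η : X → ℝ) : Prop where
  labels : π {p : X × ℝ | p.2 = 1 ∨ p.2 = -1}ᶜ = 0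
  meas : Measurable η
  mem01 : ∀ x, η x ∈ Set.Icc (0 : ℝ) 1
  cond : ∀ B : Set X, MeasurableSet B →
    π (B ×ˢ ({1} : Set ℝ)) = ∫⁻ x in B, ENNReal.ofReal (η x) ∂(π.map Prod.fst)

/-- Margin assumption MA(κ) with constant c₀ : for every measurable prediction rule
`f : X → {-1,1}`, `E[|f(X) - f*(X)|] ≤ c₀ (R(f) - R*)^(1/κ)`. -/
def MA (π : Measure (X × ℝ)) (η : X → ℝ) (κ c₀ : ℝ) : Prop :=
  ∀ f : X → ℝ, Measurable f → (∀ x, f x = 1 ∨ f x = -1) →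
    ∫ x, |f x - bayes η x| ∂(π.map Prod.fst)
      ≤ c₀ * (misRisk π f - misRisk π (bayes η)) ^ (1 / κ)

/-- Margin assumption for the hinge risk MAH(κ) with constant c : for every measurable
`f : X → [-1,1]`, `E[|f(X) - f*(X)|] ≤ c (A(f) - A*)^(1/κ)`. -/
def MAH (π : Measure (X × ℝ)) (η : X → ℝ) (κ c : ℝ) : Prop :=
  ∀ f : X → ℝ, Measurable f → (∀ x, f x ∈ Set.Icc (-1 : ℝ) 1) →
    ∫ x, |f x - bayes η x| ∂(π.map Prod.fst)
      ≤ c * (hingeRisk π f - optHingeRisk π) ^ (1 / κ)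

/-- Convex combination of f₁,…,f_M with weights w. -/
def convComb {M : ℕ} (f : Fin M → X → ℝ) (w : Fin M → ℝ) : X → ℝ :=
  fun x => ∑ j, w j * f j x

/-- The set of hinge risks of the elements of the convex hull of f₁,…,f_M. -/
def convRiskSet (π : Measure (X × ℝ)) {M : ℕ} (f : Fin M → X → ℝ) : Set ℝ :=
  {a | ∃ w : Fin M → ℝ, (∀ j, 0 ≤ w j) ∧ (∑ j, w j) = 1 ∧ a = hingeRisk π (convComb f w)}

/-- The law of an i.i.d. sample of size n from π. -/
def sample {α : Type*} [MeasurableSpace α] (π : Measure α) [SigmaFinite π] (n : ℕ) :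
    Measure (Fin n → α) :=
  Measure.pi fun _ => π

/-- The empirical hinge risk on the sample D. -/
def empHinge {n : ℕ} (D : Fin n → X × ℝ) (f : X → ℝ) : ℝ :=
  (n : ℝ)⁻¹ * ∑ i, max (1 - (D i).2 * f (D i).1) 0

/-- The empirical misclassification risk on the sample D. -/
def empMis {n : ℕ} (D : Fin n → X × ℝ) (f : X → ℝ) : ℝ :=
  (n : ℝ)⁻¹ * ∑ i, if (D i).2 ≠ f (D i).1 then (1 : ℝ) else 0

/-- The set of indices minimizing the empirical hinge risk. -/
def ermSet {n M : ℕ} (f : Fin M → X → ℝ) (D : Fin n → X × ℝ) : Finset (Fin M) :=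
  Finset.univ.filter fun j => ∀ k, empHinge D (f j) ≤ empHinge D (f k)

/-- `tf` is an empirical risk minimization (ERM) aggregate for the hinge loss. -/
def IsERM {n M : ℕ} (f : Fin M → X → ℝ) (tf : (Fin n → X × ℝ) → X → ℝ) : Prop :=
  ∀ D, ∃ j ∈ ermSet f D, tf D = f j

/-- `tf` is the averaged ERM (AERM) aggregate for the hinge loss. -/
def IsAERM {n M : ℕ} (f : Fin M → X → ℝ) (tf : (Fin n → X × ℝ) → X → ℝ) : Prop :=
  ∀ D, tf D = fun x => ((ermSet f D).card : ℝ)⁻¹ * ∑ j ∈ ermSet f D, f j x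

/-- The exponential weights for the hinge loss. -/
def aewWeight {n M : ℕ} (f : Fin M → X → ℝ) (D : Fin n → X × ℝ) (j : Fin M) : ℝ :=
  Real.exp (-(n : ℝ) * empHinge D (f j)) / ∑ k, Real.exp (-(n : ℝ) * empHinge D (f k))

/-- `tf` is the aggregation-with-exponential-weights (AEW) aggregate for the hinge loss. -/
def IsAEW {n M : ℕ} (f : Fin M → X → ℝ) (tf : (Fin n → X × ℝ) → X → ℝ) : Prop :=
  ∀ D, tf D = fun x => ∑ j, aewWeight f D j * f j x

/-- Empirical hinge risk on the first k observations of the sample D. -/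
def empHingeK {n : ℕ} (D : Fin n → X × ℝ) (k : ℕ) (f : X → ℝ) : ℝ :=
  (k : ℝ)⁻¹ * ∑ i ∈ Finset.univ.filter (fun i : Fin n => (i : ℕ) < k),
    max (1 - (D i).2 * f (D i).1) 0

/-- The cumulative exponential weights for the hinge loss. -/
def caewWeight {n M : ℕ} (f : Fin M → X → ℝ) (D : Fin n → X × ℝ) (j : Fin M) : ℝ :=
  (n : ℝ)⁻¹ * ∑ k ∈ Finset.Icc 1 n,
    Real.exp (-(k : ℝ) * empHingeK D k (f j)) /
      ∑ l, Real.exp (-(k : ℝ) * empHingeK D k (f l))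

/-- Auxiliary lemmas for Statement 1. -/
lemma measurable_sgn_comp {g : X → ℝ} (hg : Measurable g) :
    Measurable fun x => sgn (g x) := by
  unfold sgn
  exact Measurable.ite (measurableSet_le measurable_const hg)
    measurable_const measurable_const

lemma measurable_bayes {η : X → ℝ} (hη : Measurable η) : Measurable (bayes η) :=
  measurable_sgn_comp (by fun_prop)

section Aux

variable {π : Measure (X × ℝ)} [IsProbabilityMeasure π] {η : X → ℝ}

omit [IsProbabilityMeasure π] in
lemma map_fst_apply {B : Set X} (hB : MeasurableSet B) :
    (π.map Prod.fst) B = π (B ×ˢ (Set.univ : Set ℝ)) := by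
  rw [Measure.map_apply measurable_fst hB]
  congr 1
  ext p
  simp

omit [IsProbabilityMeasure π] in
lemma sum_one_neg (hπ : IsClassif π η) {B : Set X} (hB : MeasurableSet B) :
    π (B ×ˢ ({1} : Set ℝ)) + π (B ×ˢ ({-1} : Set ℝ)) = (π.map Prod.fst) B := by
  rw [map_fst_apply hB]
  have hd : Disjoint (B ×ˢ ({1} : Set ℝ)) (B ×ˢ ({-1} : Set ℝ)) := by
    rw [Set.disjoint_left]
    rintro ⟨x, y⟩ h1 h2
    have h1' : y = 1 := h1.2
    have h2' : y = -1 := h2.2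
    rw [h1'] at h2'
    norm_num at h2'
  rw [← measure_union hd (hB.prod (measurableSet_singleton _))]
  apply le_antisymm
  · apply measure_mono
    rintro ⟨x, y⟩ (⟨h1, _⟩ | ⟨h1, _⟩) <;> exact ⟨h1, trivial⟩
  have hsub : B ×ˢ (Set.univ : Set ℝ) ⊆
      (B ×ˢ ({1} : Set ℝ) ∪ B ×ˢ ({-1} : Set ℝ)) ∪ {p : X × ℝ | p.2 = 1 ∨ p.2 = -1}ᶜ := by
    rintro ⟨x, y⟩ ⟨hx, -⟩
    by_cases hy : y = 1 ∨ y = -1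
    · rcases hy with hy | hy
      · exact Or.inl (Or.inl ⟨hx, hy⟩)
      · exact Or.inl (Or.inr ⟨hx, hy⟩)
    · exact Or.inr hy
  calc π (B ×ˢ (Set.univ : Set ℝ)) ≤ _ := measure_mono hsub
    _ ≤ π (B ×ˢ ({1} : Set ℝ) ∪ B ×ˢ ({-1} : Set ℝ)) + π {p : X × ℝ | p.2 = 1 ∨ p.2 = -1}ᶜ :=
        measure_union_le _ _
    _ = π (B ×ˢ ({1} : Set ℝ) ∪ B ×ˢ ({-1} : Set ℝ)) := by rw [hπ.labels, add_zero]

lemma lint_eta_ne_top (hπ : IsClassif π η) {B : Set X} :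
    ∫⁻ x in B, ENNReal.ofReal (η x) ∂(π.map Prod.fst) ≠ ⊤ := by
  haveI : IsProbabilityMeasure (π.map Prod.fst) :=
    Measure.isProbabilityMeasure_map measurable_fst.aemeasurable
  have hmono : ∫⁻ x in B, ENNReal.ofReal (η x) ∂(π.map Prod.fst)
      ≤ ∫⁻ _ in B, 1 ∂(π.map Prod.fst) := by
    apply lintegral_mono
    intro x
    exact ENNReal.ofReal_le_one.2 (hπ.mem01 x).2
  refine ne_top_of_le_ne_top ?_ hmono
  rw [setLIntegral_one]
  exact measure_ne_top _ _

lemma cond_neg (hπ : IsClassif π η) {B : Set X} (hB : MeasurableSet B) :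
    π (B ×ˢ ({-1} : Set ℝ)) = ∫⁻ x in B, ENNReal.ofReal (1 - η x) ∂(π.map Prod.fst) := by
  have hsum := sum_one_neg (π := π) hπ hB
  rw [hπ.cond B hB] at hsum
  have hsum2 : ∫⁻ x in B, ENNReal.ofReal (η x) ∂(π.map Prod.fst)
      + ∫⁻ x in B, ENNReal.ofReal (1 - η x) ∂(π.map Prod.fst) = (π.map Prod.fst) B := by
    rw [← lintegral_add_left (hπ.meas.ennreal_ofReal)]
    rw [← setLIntegral_one B]
    apply setLIntegral_congr_fun hB
    intro x _
    beta_reduce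
    rw [← ENNReal.ofReal_add (hπ.mem01 x).1 (by linarith [(hπ.mem01 x).2])]
    norm_num
  have := hsum.trans hsum2.symm
  exact (ENNReal.add_right_inj (lint_eta_ne_top hπ)).1 this

omit [IsProbabilityMeasure π] in
lemma map_restrict_one (hπ : IsClassif π η) :
    (π.restrict (Set.univ ×ˢ ({1} : Set ℝ))).map Prod.fst
      = (π.map Prod.fst).withDensity (fun x => ENNReal.ofReal (η x)) := by
  ext B hB
  rw [Measure.map_apply measurable_fst hB, Measure.restrict_apply (measurable_fst hB),
      withDensity_apply _ hB]
  have hset : Prod.fst ⁻¹' B ∩ (Set.univ ×ˢ ({1} : Set ℝ)) = B ×ˢ ({1} : Set ℝ) := by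
    ext ⟨x, y⟩
    constructor
    · rintro ⟨hx, -, hy⟩
      exact ⟨hx, hy⟩
    · rintro ⟨hx, hy⟩
      exact ⟨hx, trivial, hy⟩
  rw [hset, hπ.cond B hB]

lemma map_restrict_neg (hπ : IsClassif π η) :
    (π.restrict (Set.univ ×ˢ ({-1} : Set ℝ))).map Prod.fst
      = (π.map Prod.fst).withDensity (fun x => ENNReal.ofReal (1 - η x)) := by
  ext B hB
  rw [Measure.map_apply measurable_fst hB, Measure.restrict_apply (measurable_fst hB),
      withDensity_apply _ hB]
  have hset : Prod.fst ⁻¹' B ∩ (Set.univ ×ˢ ({-1} : Set ℝ)) = B ×ˢ ({-1} : Set ℝ) := by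
    ext ⟨x, y⟩
    constructor
    · rintro ⟨hx, -, hy⟩
      exact ⟨hx, hy⟩
    · rintro ⟨hx, hy⟩
      exact ⟨hx, trivial, hy⟩
  rw [hset, cond_neg hπ hB]

omit [IsProbabilityMeasure π] in
lemma lint_one (hπ : IsClassif π η) {F : X → ℝ≥0∞} (hF : Measurable F) :
    ∫⁻ p in Set.univ ×ˢ ({1} : Set ℝ), F p.1 ∂π
      = ∫⁻ x, ENNReal.ofReal (η x) * F x ∂(π.map Prod.fst) := by
  rw [← lintegral_map hF measurable_fst, map_restrict_one hπ,
      lintegral_withDensity_eq_lintegral_mul _ hπ.meas.ennreal_ofReal hF]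
  rfl

lemma lint_neg (hπ : IsClassif π η) {F : X → ℝ≥0∞} (hF : Measurable F) :
    ∫⁻ p in Set.univ ×ˢ ({-1} : Set ℝ), F p.1 ∂π
      = ∫⁻ x, ENNReal.ofReal (1 - η x) * F x ∂(π.map Prod.fst) := by
  rw [← lintegral_map hF measurable_fst, map_restrict_neg hπ,
      lintegral_withDensity_eq_lintegral_mul _ (f := fun x => ENNReal.ofReal (1 - η x))
        ((measurable_const.sub hπ.meas).ennreal_ofReal) hF]
  rfl

omit [IsProbabilityMeasure π] in
lemma union_labels :
    Set.univ ×ˢ ({1} : Set ℝ) ∪ Set.univ ×ˢ ({-1} : Set ℝ)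
      = {p : X × ℝ | p.2 = 1 ∨ p.2 = -1} := by
  ext ⟨x, y⟩
  constructor
  · rintro (⟨-, h⟩ | ⟨-, h⟩)
    · exact Or.inl h
    · exact Or.inr h
  · rintro (h | h)
    · exact Or.inl ⟨trivial, h⟩
    · exact Or.inr ⟨trivial, h⟩

omit [IsProbabilityMeasure π] in
lemma disj_one_neg :
    Disjoint (Set.univ ×ˢ ({1} : Set ℝ) : Set (X × ℝ)) (Set.univ ×ˢ ({-1} : Set ℝ)) := by
  rw [Set.disjoint_left]
  rintro ⟨x, y⟩ h1 h2
  have h1' : y = 1 := h1.2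
  have h2' : y = -1 := h2.2
  rw [h1'] at h2'
  norm_num at h2'

lemma hinge_eq (hπ : IsClassif π η) {g : X → ℝ} (hg : Measurable g) :
    hingeRiskE π g
      = ∫⁻ x, (ENNReal.ofReal (η x) * ENNReal.ofReal (max (1 - g x) 0)
          + ENNReal.ofReal (1 - η x) * ENNReal.ofReal (max (1 + g x) 0))
        ∂(π.map Prod.fst) := by
  have hS1 : MeasurableSet (Set.univ ×ˢ ({1} : Set ℝ) : Set (X × ℝ)) :=
    MeasurableSet.univ.prod (measurableSet_singleton _)
  have hS2 : MeasurableSet (Set.univ ×ˢ ({-1} : Set ℝ) : Set (X × ℝ)) :=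
    MeasurableSet.univ.prod (measurableSet_singleton _)
  unfold hingeRiskE
  rw [← lintegral_add_compl (fun p : X × ℝ => ENNReal.ofReal (max (1 - p.2 * g p.1) 0))
      (hS1.union hS2)]
  have hz : ∫⁻ p in (Set.univ ×ˢ ({1} : Set ℝ) ∪ Set.univ ×ˢ ({-1} : Set ℝ))ᶜ,
      ENNReal.ofReal (max (1 - p.2 * g p.1) 0) ∂π = 0 := by
    apply setLIntegral_measure_zero
    rw [union_labels]; exact hπ.labels
  rw [hz, add_zero, lintegral_union hS2 disj_one_neg]
  have h1 : ∫⁻ p in Set.univ ×ˢ ({1} : Set ℝ),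
      ENNReal.ofReal (max (1 - p.2 * g p.1) 0) ∂π
      = ∫⁻ p in Set.univ ×ˢ ({1} : Set ℝ),
          ENNReal.ofReal (max (1 - g p.1) 0) ∂π := by
    apply setLIntegral_congr_fun hS1
    intro p hp
    beta_reduce
    have hy : p.2 = 1 := hp.2
    rw [hy, one_mul]
  have h2 : ∫⁻ p in Set.univ ×ˢ ({-1} : Set ℝ),
      ENNReal.ofReal (max (1 - p.2 * g p.1) 0) ∂π
      = ∫⁻ p in Set.univ ×ˢ ({-1} : Set ℝ),
          ENNReal.ofReal (max (1 + g p.1) 0) ∂π := by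
    apply setLIntegral_congr_fun hS2
    intro p hp
    beta_reduce
    have hy : p.2 = -1 := hp.2
    rw [hy]; ring_nf
  rw [h1, h2,
      lint_one hπ (F := fun x => ENNReal.ofReal (max (1 - g x) 0))
        ((measurable_const.sub hg).max measurable_const).ennreal_ofReal,
      lint_neg hπ (F := fun x => ENNReal.ofReal (max (1 + g x) 0))
        ((measurable_const.add hg).max measurable_const).ennreal_ofReal,
      ← lintegral_add_left
        (f := fun x => ENNReal.ofReal (η x) * ENNReal.ofReal (max (1 - g x) 0))
        (hπ.meas.ennreal_ofReal.mul
          ((measurable_const.sub hg).max measurable_const).ennreal_ofReal)]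

lemma mis_eq (hπ : IsClassif π η) {g : X → ℝ} (hg : Measurable g) :
    misRiskE π g
      = ∫⁻ x, (if 0 ≤ g x then ENNReal.ofReal (1 - η x) else ENNReal.ofReal (η x))
        ∂(π.map Prod.fst) := by
  set T : Set (X × ℝ) := {p | p.2 ≠ sgn (g p.1)} with hT
  have hA : MeasurableSet {x | 0 ≤ g x} := measurableSet_le measurable_const hg
  have hU1 : T ∩ Set.univ ×ˢ ({1} : Set ℝ) = {x | 0 ≤ g x}ᶜ ×ˢ ({1} : Set ℝ) := by
    ext ⟨x, y⟩
    simp only [hT, Set.mem_inter_iff, Set.mem_setOf_eq, Set.mem_prod, Set.mem_univ,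
      Set.mem_singleton_iff, Set.mem_compl_iff, true_and, sgn]
    by_cases h : 0 ≤ g x
    · rw [if_pos h]
      constructor
      · rintro ⟨hne, rfl⟩; exact absurd rfl hne
      · rintro ⟨hh, rfl⟩; exact (hh h).elim
    · rw [if_neg h]
      constructor
      · rintro ⟨-, rfl⟩; exact ⟨h, rfl⟩
      · rintro ⟨-, rfl⟩; exact ⟨by norm_num, rfl⟩
  have hU2 : T ∩ Set.univ ×ˢ ({-1} : Set ℝ) = {x | 0 ≤ g x} ×ˢ ({-1} : Set ℝ) := by
    ext ⟨x, y⟩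
    simp only [hT, Set.mem_inter_iff, Set.mem_setOf_eq, Set.mem_prod, Set.mem_univ,
      Set.mem_singleton_iff, true_and, sgn]
    by_cases h : 0 ≤ g x
    · rw [if_pos h]
      constructor
      · rintro ⟨-, rfl⟩; exact ⟨h, rfl⟩
      · rintro ⟨-, rfl⟩; exact ⟨by norm_num, rfl⟩
    · rw [if_neg h]
      constructor
      · rintro ⟨hne, rfl⟩; exact absurd rfl hne
      · rintro ⟨hh, rfl⟩; exact (h hh).elim
  have hTsplit : π T = π ({x | 0 ≤ g x}ᶜ ×ˢ ({1} : Set ℝ))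
      + π ({x | 0 ≤ g x} ×ˢ ({-1} : Set ℝ)) := by
    have hTinter : π T
        = π (T ∩ (Set.univ ×ˢ ({1} : Set ℝ) ∪ Set.univ ×ˢ ({-1} : Set ℝ))) := by
      apply le_antisymm _ (measure_mono Set.inter_subset_left)
      calc π T ≤ π ((T ∩ (Set.univ ×ˢ ({1} : Set ℝ) ∪ Set.univ ×ˢ ({-1} : Set ℝ)))
            ∪ {p : X × ℝ | p.2 = 1 ∨ p.2 = -1}ᶜ) := by
            apply measure_mono
            intro p hp
            by_cases h : p.2 = 1 ∨ p.2 = -1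
            · left; exact ⟨hp, by rw [union_labels]; exact h⟩
            · right; exact h
        _ ≤ _ + π {p : X × ℝ | p.2 = 1 ∨ p.2 = -1}ᶜ := measure_union_le _ _
        _ = _ := by rw [hπ.labels, add_zero]
    rw [hTinter, Set.inter_union_distrib_left, hU1, hU2]
    apply measure_union _ (hA.prod (measurableSet_singleton _))
    rw [Set.disjoint_left]
    rintro ⟨x, y⟩ h1 h2
    have h1' : y = 1 := h1.2
    have h2' : y = -1 := h2.2
    rw [h1'] at h2'
    norm_num at h2'
  have hrhs : ∫⁻ x, (if 0 ≤ g x then ENNReal.ofReal (1 - η x) else ENNReal.ofReal (η x))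
        ∂(π.map Prod.fst)
      = ∫⁻ x in {x | 0 ≤ g x}, ENNReal.ofReal (1 - η x) ∂(π.map Prod.fst)
        + ∫⁻ x in {x | 0 ≤ g x}ᶜ, ENNReal.ofReal (η x) ∂(π.map Prod.fst) := by
    have e1 : ∫⁻ x in {x | 0 ≤ g x},
        (if 0 ≤ g x then ENNReal.ofReal (1 - η x) else ENNReal.ofReal (η x))
          ∂(π.map Prod.fst)
        = ∫⁻ x in {x | 0 ≤ g x}, ENNReal.ofReal (1 - η x) ∂(π.map Prod.fst) :=
      setLIntegral_congr_fun hA (by intro x hx; exact if_pos hx)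
    have e2 : ∫⁻ x in {x | 0 ≤ g x}ᶜ,
        (if 0 ≤ g x then ENNReal.ofReal (1 - η x) else ENNReal.ofReal (η x))
          ∂(π.map Prod.fst)
        = ∫⁻ x in {x | 0 ≤ g x}ᶜ, ENNReal.ofReal (η x) ∂(π.map Prod.fst) :=
      setLIntegral_congr_fun hA.compl (by intro x hx; exact if_neg hx)
    rw [← lintegral_add_compl
        (fun x => if 0 ≤ g x then ENNReal.ofReal (1 - η x) else ENNReal.ofReal (η x)) hA,
        e1, e2]
  rw [misRiskE, ← hT, hTsplit, hrhs, hπ.cond _ hA.compl, cond_neg hπ hA, add_comm]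

end Aux

lemma real_key (t a : ℝ) (h0 : 0 ≤ t) (h1 : t ≤ 1) :
    (if 0 ≤ a then 1 - t else t)
      + (t * max (1 - sgn (2 * t - 1)) 0 + (1 - t) * max (1 + sgn (2 * t - 1)) 0)
    ≤ (t * max (1 - a) 0 + (1 - t) * max (1 + a) 0)
      + (if 0 ≤ sgn (2 * t - 1) then 1 - t else t) := by
  have hm1 : 1 - a ≤ max (1 - a) 0 := le_max_left _ _
  have hm2 : 1 + a ≤ max (1 + a) 0 := le_max_left _ _
  have k1 : t * (1 - a) ≤ t * max (1 - a) 0 := mul_le_mul_of_nonneg_left hm1 h0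
  have k1' : 0 ≤ t * max (1 - a) 0 := mul_nonneg h0 (le_max_right _ _)
  have k2 : (1 - t) * (1 + a) ≤ (1 - t) * max (1 + a) 0 :=
    mul_le_mul_of_nonneg_left hm2 (by linarith)
  have k2' : 0 ≤ (1 - t) * max (1 + a) 0 := mul_nonneg (by linarith) (le_max_right _ _)
  rcases le_or_gt 0 (2 * t - 1) with h | h
  · rw [sgn, if_pos h]
    norm_num
    rcases le_or_gt 0 a with ha | ha
    · rw [if_pos ha]
      rcases le_or_gt a 1 with ha' | ha'
      · nlinarith [mul_nonneg (by linarith : (0:ℝ) ≤ 1 - a) (by linarith : (0:ℝ) ≤ 2 * t - 1)]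
      · nlinarith [mul_nonneg (by linarith : (0:ℝ) ≤ a - 1) (by linarith : (0:ℝ) ≤ 1 - t)]
    · rw [if_neg (not_le.2 ha)]
      rcases le_or_gt (-1) a with ha' | ha'
      · nlinarith [mul_nonneg (by linarith : (0:ℝ) ≤ -a) (by linarith : (0:ℝ) ≤ 2 * t - 1)]
      · nlinarith [mul_nonneg (by linarith : (0:ℝ) ≤ -1 - a) h0]
  · rw [sgn, if_neg (not_le.2 h)]
    norm_num
    rcases le_or_gt 0 a with ha | ha
    · rw [if_pos ha]
      rcases le_or_gt a 1 with ha' | ha'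
      · nlinarith [mul_nonneg ha (by linarith : (0:ℝ) ≤ 1 - 2 * t)]
      · nlinarith [mul_nonneg (by linarith : (0:ℝ) ≤ a - 1) (by linarith : (0:ℝ) ≤ 1 - t)]
    · rw [if_neg (not_le.2 ha)]
      rcases le_or_gt (-1) a with ha' | ha'
      · nlinarith [mul_nonneg (by linarith : (0:ℝ) ≤ 1 + a) (by linarith : (0:ℝ) ≤ 1 - 2 * t)]
      · nlinarith [mul_nonneg (by linarith : (0:ℝ) ≤ -1 - a) h0]

lemma ennreal_key (t a : ℝ) (h0 : 0 ≤ t) (h1 : t ≤ 1) :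
    (if 0 ≤ a then ENNReal.ofReal (1 - t) else ENNReal.ofReal t)
      + (ENNReal.ofReal t * ENNReal.ofReal (max (1 - sgn (2 * t - 1)) 0)
         + ENNReal.ofReal (1 - t) * ENNReal.ofReal (max (1 + sgn (2 * t - 1)) 0))
    ≤ (ENNReal.ofReal t * ENNReal.ofReal (max (1 - a) 0)
         + ENNReal.ofReal (1 - t) * ENNReal.ofReal (max (1 + a) 0))
      + (if 0 ≤ sgn (2 * t - 1) then ENNReal.ofReal (1 - t) else ENNReal.ofReal t) := by
  have e1 : (if 0 ≤ a then ENNReal.ofReal (1 - t) else ENNReal.ofReal t)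
      = ENNReal.ofReal (if 0 ≤ a then 1 - t else t) := by split_ifs <;> rfl
  have e2 : (if 0 ≤ sgn (2 * t - 1) then ENNReal.ofReal (1 - t) else ENNReal.ofReal t)
      = ENNReal.ofReal (if 0 ≤ sgn (2 * t - 1) then 1 - t else t) := by split_ifs <;> rfl
  rw [e1, e2, ← ENNReal.ofReal_mul h0, ← ENNReal.ofReal_mul (by linarith : (0:ℝ) ≤ 1 - t),
      ← ENNReal.ofReal_mul h0, ← ENNReal.ofReal_mul (by linarith : (0:ℝ) ≤ 1 - t),
      ← ENNReal.ofReal_add (mul_nonneg h0 (le_max_right _ _))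
        (mul_nonneg (by linarith) (le_max_right _ _)),
      ← ENNReal.ofReal_add (mul_nonneg h0 (le_max_right _ _))
        (mul_nonneg (by linarith) (le_max_right _ _)),
      ← ENNReal.ofReal_add (by split_ifs <;> linarith)
        (add_nonneg (mul_nonneg h0 (le_max_right _ _))
          (mul_nonneg (by linarith) (le_max_right _ _))),
      ← ENNReal.ofReal_add
        (add_nonneg (mul_nonneg h0 (le_max_right _ _))
          (mul_nonneg (by linarith) (le_max_right _ _))) (by split_ifs <;> linarith)]
  exact ENNReal.ofReal_le_ofReal (real_key t a h0 h1)


/-- R(f) - R* ≤ A(f) - A* for any measurable f : X → ℝ. -/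
theorem excess_bayes_risk_le_excess_hinge_risk
    (π : Measure (X × ℝ)) [IsProbabilityMeasure π] (η : X → ℝ)
    (hπ : IsClassif π η) (f : X → ℝ) (hf : Measurable f) :
    misRiskE π f - misRiskE π (bayes η) ≤ hingeRiskE π f - optHingeRiskE π := by
  have hbm : Measurable (bayes η) := measurable_bayes hπ.meas
  have hAf : MeasurableSet {x | 0 ≤ f x} := measurableSet_le measurable_const hf
  have key : misRiskE π f + hingeRiskE π (bayes η)
      ≤ hingeRiskE π f + misRiskE π (bayes η) := by
    rw [mis_eq hπ hf, mis_eq hπ hbm, hinge_eq hπ hf, hinge_eq hπ hbm,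
        ← lintegral_add_left (Measurable.ite hAf
          ((measurable_const.sub hπ.meas).ennreal_ofReal) (hπ.meas.ennreal_ofReal) :
          Measurable fun x => if 0 ≤ f x then ENNReal.ofReal (1 - η x) else ENNReal.ofReal (η x)),
        ← lintegral_add_left
          (f := fun x => ENNReal.ofReal (η x) * ENNReal.ofReal (max (1 - f x) 0)
            + ENNReal.ofReal (1 - η x) * ENNReal.ofReal (max (1 + f x) 0))
          ((hπ.meas.ennreal_ofReal.mul
              ((measurable_const.sub hf).max measurable_const).ennreal_ofReal).add
            ((measurable_const.sub hπ.meas).ennreal_ofReal.mul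
              ((measurable_const.add hf).max measurable_const).ennreal_ofReal))]
    apply lintegral_mono
    intro x
    have hkey := ennreal_key (η x) (f x) (hπ.mem01 x).1 (hπ.mem01 x).2
    simp [bayes] at hkey ⊢
    exact hkey
  have hAopt_le : optHingeRiskE π ≤ hingeRiskE π (bayes η) := by
    unfold optHingeRiskE; exact iInf₂_le _ hbm
  have key2 : misRiskE π f + optHingeRiskE π ≤ hingeRiskE π f + misRiskE π (bayes η) :=
    le_trans (add_le_add le_rfl hAopt_le) key
  have hd : optHingeRiskE π ≠ ⊤ := by
    have hle : optHingeRiskE π ≤ hingeRiskE π (fun _ => (0 : ℝ)) := by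
      unfold optHingeRiskE; exact iInf₂_le _ measurable_const
    refine ne_top_of_le_ne_top ?_ hle
    unfold hingeRiskE
    have h1 : ∀ p : X × ℝ, ENNReal.ofReal (max (1 - p.2 * (fun _ => (0:ℝ)) p.1) 0) = 1 := by
      intro p
      rw [mul_zero, sub_zero, max_eq_left zero_le_one, ENNReal.ofReal_one]
    simp only [h1, lintegral_one, measure_univ]
    exact ENNReal.one_ne_top
  have hdc : optHingeRiskE π ≤ hingeRiskE π f := by
    unfold optHingeRiskE; exact iInf₂_le _ hf
  rw [tsub_le_iff_right, ← ENNReal.add_le_add_iff_right hd,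
      add_right_comm (hingeRiskE π f - optHingeRiskE π) (misRiskE π (bayes η))
        (optHingeRiskE π),
      tsub_add_cancel_of_le hdc]
  exact key2


end AggClass
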